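/- (Variational formulation of the dual norm.) For every κ ∈ ℝ^p, Ω*(κ) equals the minimum, over all τ ≥ 0 and all families ξ = (ξ^g)_{g∈𝒢} of vectors in ℝ^p satisfying Σ_{g∈𝒢} ξ^g = κ, ξ^g_j = 0 for every j ∉ g, and ‖ξ^g‖₁ ≤ τη_g for every g ∈ 𝒢, of the value τ; in particular this minimum is attained. -/

import Mathlib

/-- The structured norm Ω(w) = Σ_{g∈𝒢} η_g · max_{j∈g} |w_j|. -/
noncomputable def Omega {p : ℕ} (G : Finset (Finset (Fin p))) (η : Finset (Fin p) → ℝ)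
    (w : Fin p → ℝ) : ℝ :=
  ∑ g ∈ G, η g * ⨆ j ∈ g, |w j|

/-- The dual norm Ω*(κ) = sup { zᵀκ : Ω(z) ≤ 1 }. -/
noncomputable def dualNorm {p : ℕ} (G : Finset (Finset (Fin p))) (η : Finset (Fin p) → ℝ)
    (κ : Fin p → ℝ) : ℝ :=
  sSup { t : ℝ | ∃ z : Fin p → ℝ, Omega G η z ≤ 1 ∧ t = ∑ j, z j * κ j }

/-- variational formulation of the dual norm; the minimum is attained
    and equals Ω*(κ). -/
lemma biSup_eq_sup' {p : ℕ} {g : Finset (Fin p)} (hg : g.Nonempty) (w : Fin p → ℝ) :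
    (⨆ j ∈ g, |w j|) = g.sup' hg (fun j => |w j|) := by
  classical
  obtain ⟨a, ha⟩ := hg
  rw [Finset.ciSup_eq_max'_image _ ⟨a, ha, by simp [Real.sSup_empty, abs_nonneg]⟩
      (Finset.image_nonempty.mpr ⟨a, ha⟩),
    Finset.max'_eq_sup', Finset.sup'_image]
  rfl

lemma le_supAbs {p : ℕ} {g : Finset (Fin p)} (hg : g.Nonempty) (w : Fin p → ℝ)
    {j : Fin p} (hj : j ∈ g) : |w j| ≤ ⨆ j ∈ g, |w j| := by
  rw [biSup_eq_sup' hg]; exact Finset.le_sup' (fun j => |w j|) hj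

lemma supAbs_nonneg {p : ℕ} {g : Finset (Fin p)} (hg : g.Nonempty) (w : Fin p → ℝ) :
    0 ≤ ⨆ j ∈ g, |w j| :=
  le_trans (abs_nonneg _) (le_supAbs hg w hg.choose_spec)

lemma supAbs_le {p : ℕ} {g : Finset (Fin p)} (hg : g.Nonempty) (w : Fin p → ℝ)
    {c : ℝ} (h : ∀ j ∈ g, |w j| ≤ c) : (⨆ j ∈ g, |w j|) ≤ c := by
  rw [biSup_eq_sup' hg]; exact Finset.sup'_le _ _ h

lemma exists_supAbs {p : ℕ} {g : Finset (Fin p)} (hg : g.Nonempty) (w : Fin p → ℝ) :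
    ∃ j, j ∈ g ∧ (⨆ j ∈ g, |w j|) = |w j| := by
  rw [biSup_eq_sup' hg]; exact Finset.exists_mem_eq_sup' hg _

lemma supAbs_smul {p : ℕ} {g : Finset (Fin p)} (hg : g.Nonempty) (w : Fin p → ℝ)
    {c : ℝ} (hc : 0 ≤ c) : (⨆ j ∈ g, |c * w j|) = c * ⨆ j ∈ g, |w j| := by
  rw [biSup_eq_sup' hg, biSup_eq_sup' hg,
    Finset.comp_sup'_eq_sup'_comp hg (fun x => c * x) (fun x y => mul_max_of_nonneg x y hc)]
  simp [Function.comp, abs_mul, abs_of_nonneg hc]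

lemma Omega_smul {p : ℕ} (G : Finset (Finset (Fin p))) (η : Finset (Fin p) → ℝ)
    (hne : ∀ g ∈ G, g.Nonempty) (w : Fin p → ℝ) {c : ℝ} (hc : 0 ≤ c) :
    Omega G η (c • w) = c * Omega G η w := by
  unfold Omega
  rw [Finset.mul_sum]
  refine Finset.sum_congr rfl fun g hg => ?_
  have : (⨆ j ∈ g, |(c • w) j|) = c * ⨆ j ∈ g, |w j| := by
    simpa using supAbs_smul (hne g hg) w hc
  rw [this]; ring

lemma Omega_zero {p : ℕ} (G : Finset (Finset (Fin p))) (η : Finset (Fin p) → ℝ)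
    (hne : ∀ g ∈ G, g.Nonempty) : Omega G η (0 : Fin p → ℝ) = 0 := by
  unfold Omega
  refine Finset.sum_eq_zero fun g hg => ?_
  rw [biSup_eq_sup' (hne g hg)]
  simp


theorem dualNorm_variational
    (p : ℕ) (hp : 1 ≤ p) (G : Finset (Finset (Fin p))) (η : Finset (Fin p) → ℝ)
    (hη : ∀ g ∈ G, 0 < η g) (hne : ∀ g ∈ G, g.Nonempty)
    (hcover : ∀ j : Fin p, ∃ g ∈ G, j ∈ g) (κ : Fin p → ℝ) :
    ∃ (τ : ℝ) (ξ : Finset (Fin p) → Fin p → ℝ),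
      0 ≤ τ ∧
      (∀ j, ∑ g ∈ G, ξ g j = κ j) ∧
      (∀ g ∈ G, ∀ j, j ∉ g → ξ g j = 0) ∧
      (∀ g ∈ G, ∑ j, |ξ g j| ≤ τ * η g) ∧
      dualNorm G η κ = τ ∧
      (∀ (τ' : ℝ) (ξ' : Finset (Fin p) → Fin p → ℝ),
        0 ≤ τ' →
        (∀ j, ∑ g ∈ G, ξ' g j = κ j) →
        (∀ g ∈ G, ∀ j, j ∉ g → ξ' g j = 0) →
        (∀ g ∈ G, ∑ j, |ξ' g j| ≤ τ' * η g) →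
        τ ≤ τ') := by
  classical
  choose gsel hgselG hgselmem using hcover
  have hGne : G.Nonempty := ⟨gsel ⟨0, hp⟩, hgselG _⟩
  set S : Set ℝ := { t : ℝ | ∃ z : Fin p → ℝ, Omega G η z ≤ 1 ∧ t = ∑ j, z j * κ j } with hS
  have h0S : (0:ℝ) ∈ S := ⟨0, by rw [Omega_zero G η hne]; norm_num, by simp⟩
  -- weak duality
  have hweak : ∀ (τ' : ℝ) (ξ' : Finset (Fin p) → Fin p → ℝ),
      0 ≤ τ' → (∀ j, ∑ g ∈ G, ξ' g j = κ j) → (∀ g ∈ G, ∀ j, j ∉ g → ξ' g j = 0) →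
      (∀ g ∈ G, ∑ j, |ξ' g j| ≤ τ' * η g) → ∀ t ∈ S, t ≤ τ' := by
    rintro τ' ξ' hτ' hsum hsupp hl1 t ⟨z, hz, rfl⟩
    have key : ∀ g ∈ G, ∑ j, z j * ξ' g j ≤ (⨆ j ∈ g, |z j|) * (τ' * η g) := by
      intro g hg
      have h1 : ∑ j, z j * ξ' g j ≤ ∑ j, (⨆ j ∈ g, |z j|) * |ξ' g j| := by
        refine Finset.sum_le_sum fun j _ => ?_
        by_cases hj : j ∈ g
        · calc z j * ξ' g j ≤ |z j * ξ' g j| := le_abs_self _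
            _ = |z j| * |ξ' g j| := abs_mul _ _
            _ ≤ (⨆ j ∈ g, |z j|) * |ξ' g j| :=
              mul_le_mul_of_nonneg_right (le_supAbs (hne g hg) z hj) (abs_nonneg _)
        · simp [hsupp g hg j hj]
      calc ∑ j, z j * ξ' g j ≤ ∑ j, (⨆ j ∈ g, |z j|) * |ξ' g j| := h1
        _ = (⨆ j ∈ g, |z j|) * ∑ j, |ξ' g j| := by rw [Finset.mul_sum]
        _ ≤ (⨆ j ∈ g, |z j|) * (τ' * η g) :=
          mul_le_mul_of_nonneg_left (hl1 g hg) (supAbs_nonneg (hne g hg) z)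
    calc ∑ j, z j * κ j = ∑ j, z j * ∑ g ∈ G, ξ' g j := by simp_rw [hsum]
      _ = ∑ j, ∑ g ∈ G, z j * ξ' g j := by simp_rw [Finset.mul_sum]
      _ = ∑ g ∈ G, ∑ j, z j * ξ' g j := Finset.sum_comm
      _ ≤ ∑ g ∈ G, (⨆ j ∈ g, |z j|) * (τ' * η g) := Finset.sum_le_sum key
      _ = τ' * Omega G η z := by
          unfold Omega; rw [Finset.mul_sum]
          exact Finset.sum_congr rfl fun g hg => by ring
      _ ≤ τ' * 1 := mul_le_mul_of_nonneg_left hz hτ'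
      _ = τ' := mul_one _
  -- a feasible point
  set A : ℝ := ∑ j, |κ j| with hA
  have hA0 : 0 ≤ A := Finset.sum_nonneg fun j _ => abs_nonneg _
  set τ₀ : ℝ := G.sup' hGne (fun g => A / η g) with hτ₀
  set ξ₀ : Finset (Fin p) → Fin p → ℝ := fun g j => if gsel j = g then κ j else 0 with hξ₀
  have hτ₀0 : 0 ≤ τ₀ := by
    rw [hτ₀]
    exact le_trans (div_nonneg hA0 (hη _ (hgselG ⟨0, hp⟩)).le)
      (Finset.le_sup' (fun g => A / η g) (hgselG ⟨0, hp⟩))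
  have hfeas₀sum : ∀ j, ∑ g ∈ G, ξ₀ g j = κ j := by
    intro j
    simp only [hξ₀]
    rw [Finset.sum_ite_eq G (gsel j) (fun _ => κ j)]
    simp [hgselG j]
  have hfeas₀supp : ∀ g ∈ G, ∀ j, j ∉ g → ξ₀ g j = 0 := by
    intro g hg j hj
    simp only [hξ₀]
    rw [if_neg]; rintro rfl; exact hj (hgselmem j)
  have hfeas₀l1 : ∀ g ∈ G, ∑ j, |ξ₀ g j| ≤ τ₀ * η g := by
    intro g hg
    have h1 : ∑ j, |ξ₀ g j| ≤ A := by
      rw [hA]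
      refine Finset.sum_le_sum fun j _ => ?_
      simp only [hξ₀]
      split <;> simp [abs_nonneg]
    refine h1.trans ?_
    rw [← div_le_iff₀ (hη g hg), hτ₀]
    exact Finset.le_sup' (fun g => A / η g) hg
  have hSbdd : BddAbove S := ⟨τ₀, fun t ht => hweak τ₀ ξ₀ hτ₀0 hfeas₀sum hfeas₀supp hfeas₀l1 t ht⟩
  have hSne : S.Nonempty := ⟨0, h0S⟩
  set τ : ℝ := sSup S with hτdef
  have hτ0 : 0 ≤ τ := le_csSup hSbdd h0S
  have hdual : dualNorm G η κ = τ := rfl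
  -- the compact convex set K
  set D : Set (Finset (Fin p) → Fin p → ℝ) :=
    { ξ | (∀ g, g ∉ G → ξ g = 0) ∧ (∀ g ∈ G, ∀ j, j ∉ g → ξ g j = 0) ∧
          ∀ g ∈ G, ∑ j, |ξ g j| ≤ τ * η g } with hD
  set F : (Finset (Fin p) → Fin p → ℝ) → (Fin p → ℝ) := fun ξ j => ∑ g ∈ G, ξ g j with hF
  have hFcont : Continuous F :=
    continuous_pi fun j => continuous_finset_sum _ fun g _ =>
      (continuous_apply j).comp (continuous_apply g)
  have hDclosed : IsClosed D := by
    have e : D = (⋂ g, ⋂ _ : g ∉ G, {ξ : Finset (Fin p) → Fin p → ℝ | ξ g = 0}) ∩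
        ((⋂ g, ⋂ _ : g ∈ G, ⋂ j, ⋂ _ : j ∉ g, {ξ : Finset (Fin p) → Fin p → ℝ | ξ g j = 0}) ∩
         (⋂ g, ⋂ _ : g ∈ G, {ξ : Finset (Fin p) → Fin p → ℝ | ∑ j, |ξ g j| ≤ τ * η g})) := by
      ext ξ
      simp only [hD, Set.mem_setOf_eq, Set.mem_inter_iff, Set.mem_iInter]
      try tauto
    rw [e]
    refine IsClosed.inter ?_ (IsClosed.inter ?_ ?_)
    · exact isClosed_iInter fun g => isClosed_iInter fun _ =>
        isClosed_eq (continuous_apply g) continuous_const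
    · exact isClosed_iInter fun g => isClosed_iInter fun _ => isClosed_iInter fun j =>
        isClosed_iInter fun _ =>
          isClosed_eq ((continuous_apply j).comp (continuous_apply g)) continuous_const
    · exact isClosed_iInter fun g => isClosed_iInter fun _ =>
        isClosed_le (continuous_finset_sum _ fun j _ =>
          ((continuous_apply j).comp (continuous_apply g)).abs) continuous_const
  have hDbdd : Bornology.IsBounded D := by
    rw [isBounded_iff_forall_norm_le]
    set C : ℝ := (G.sup' hGne fun g => τ * η g) ⊔ 0 with hC
    have hC0 : 0 ≤ C := le_sup_right
    refine ⟨C, fun ξ hξ => ?_⟩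
    rw [pi_norm_le_iff_of_nonneg hC0]
    intro g
    rw [pi_norm_le_iff_of_nonneg hC0]
    intro j
    rw [Real.norm_eq_abs]
    by_cases hg : g ∈ G
    · calc |ξ g j| ≤ ∑ j', |ξ g j'| :=
            Finset.single_le_sum (f := fun j' => |ξ g j'|) (fun j' _ => abs_nonneg _) (Finset.mem_univ j)
        _ ≤ τ * η g := hξ.2.2 g hg
        _ ≤ C := by
            rw [hC]
            exact le_trans (Finset.le_sup' (fun g => τ * η g) hg) le_sup_left
    · rw [hξ.1 g hg]; simpa using hC0
  have hDcompact : IsCompact D := Metric.isCompact_of_isClosed_isBounded hDclosed hDbdd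
  set K : Set (Fin p → ℝ) := F '' D with hK
  have hKclosed : IsClosed K := (hDcompact.image hFcont).isClosed
  have hKconvex : Convex ℝ K := by
    rintro x ⟨ξ, hξ, rfl⟩ y ⟨ζ, hζ, rfl⟩ a b ha hb hab
    refine ⟨a • ξ + b • ζ, ⟨?_, ?_, ?_⟩, ?_⟩
    · intro g hg; simp [hξ.1 g hg, hζ.1 g hg]
    · intro g hg j hj; simp [hξ.2.1 g hg j hj, hζ.2.1 g hg j hj]
    · intro g hg
      calc ∑ j, |(a • ξ + b • ζ) g j| ≤ ∑ j, (a * |ξ g j| + b * |ζ g j|) := by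
            refine Finset.sum_le_sum fun j _ => ?_
            simp only [Pi.add_apply, Pi.smul_apply, smul_eq_mul]
            calc |a * ξ g j + b * ζ g j| ≤ |a * ξ g j| + |b * ζ g j| := abs_add_le _ _
              _ = a * |ξ g j| + b * |ζ g j| := by
                  rw [abs_mul, abs_mul, abs_of_nonneg ha, abs_of_nonneg hb]
        _ = a * ∑ j, |ξ g j| + b * ∑ j, |ζ g j| := by
            rw [Finset.sum_add_distrib, Finset.mul_sum, Finset.mul_sum]
        _ ≤ a * (τ * η g) + b * (τ * η g) :=
            add_le_add (mul_le_mul_of_nonneg_left (hξ.2.2 g hg) ha)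
              (mul_le_mul_of_nonneg_left (hζ.2.2 g hg) hb)
        _ = τ * η g := by rw [← add_mul, hab, one_mul]
    · funext j
      simp only [hF, Pi.add_apply, Pi.smul_apply, smul_eq_mul, Finset.mul_sum,
        ← Finset.sum_add_distrib]
  have hΩnonneg : ∀ w : Fin p → ℝ, 0 ≤ Omega G η w := by
    intro w
    exact Finset.sum_nonneg fun g hg => mul_nonneg (hη g hg).le (supAbs_nonneg (hne g hg) w)
  have hκK : κ ∈ K := by
    by_contra hκ
    obtain ⟨f, u, hfK, hfκ⟩ := geometric_hahn_banach_closed_point hKconvex hKclosed hκ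
    set z : Fin p → ℝ := fun j => f (Pi.single j 1) with hz
    have hfx : ∀ x : Fin p → ℝ, f x = ∑ j, z j * x j := by
      intro x
      have hx : x = ∑ j, x j • (Pi.single j 1 : Fin p → ℝ) := by
        funext i
        simp [Pi.single_apply]
      conv_lhs => rw [hx]
      rw [map_sum]
      refine Finset.sum_congr rfl fun j _ => ?_
      rw [map_smul]
      simp [hz, mul_comm]
    set jsel : Finset (Fin p) → Fin p := fun g =>
      if h : g ∈ G then (exists_supAbs (hne g h) z).choose else ⟨0, hp⟩ with hjsel
    have hjsel1 : ∀ g ∈ G, jsel g ∈ g := by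
      intro g h
      simp only [hjsel, dif_pos h]
      exact (exists_supAbs (hne g h) z).choose_spec.1
    have hjsel2 : ∀ g ∈ G, (⨆ j ∈ g, |z j|) = |z (jsel g)| := by
      intro g h
      simp only [hjsel, dif_pos h]
      exact (exists_supAbs (hne g h) z).choose_spec.2
    set v : Finset (Fin p) → ℝ := fun g => if 0 ≤ z (jsel g) then τ * η g else -(τ * η g) with hv
    have hvabs : ∀ g ∈ G, |v g| = τ * η g := by
      intro g hg
      have h0 : 0 ≤ τ * η g := mul_nonneg hτ0 (hη g hg).le
      simp only [hv]
      split
      · exact abs_of_nonneg h0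
      · rw [abs_neg]; exact abs_of_nonneg h0
    have hvz : ∀ g ∈ G, z (jsel g) * v g = τ * η g * |z (jsel g)| := by
      intro g hg
      simp only [hv]
      split
      · rename_i h; rw [abs_of_nonneg h]; ring
      · rename_i h; rw [abs_of_neg (lt_of_not_ge h)]; ring
    set ξs : Finset (Fin p) → Fin p → ℝ :=
      fun g j => if g ∈ G ∧ j = jsel g then v g else 0 with hξs
    have hξsD : ξs ∈ D := by
      refine ⟨?_, ?_, ?_⟩
      · intro g hg; funext j; simp [hξs, hg]
      · intro g hg j hj
        simp only [hξs]
        rw [if_neg]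
        rintro ⟨-, rfl⟩
        exact hj (hjsel1 g hg)
      · intro g hg
        have : ∀ j, |ξs g j| = if j = jsel g then |v g| else 0 := by
          intro j
          simp only [hξs, hg, true_and]
          split <;> simp
        simp_rw [this]
        rw [Finset.sum_ite_eq' Finset.univ (jsel g) (fun _ => |v g|)]
        simp [hvabs g hg]
    have hFa : f (F ξs) = τ * Omega G η z := by
      rw [hfx]
      have e1 : ∀ j, z j * F ξs j = ∑ g ∈ G, z j * ξs g j := by
        intro j; simp [hF, Finset.mul_sum]
      calc ∑ j, z j * F ξs j = ∑ j, ∑ g ∈ G, z j * ξs g j := by simp_rw [e1]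
        _ = ∑ g ∈ G, ∑ j, z j * ξs g j := Finset.sum_comm
        _ = ∑ g ∈ G, z (jsel g) * v g := by
            refine Finset.sum_congr rfl fun g hg => ?_
            have : ∀ j, z j * ξs g j = if j = jsel g then z j * v g else 0 := by
              intro j
              simp only [hξs, hg, true_and]
              split <;> simp
            simp_rw [this]
            rw [Finset.sum_ite_eq' Finset.univ (jsel g) (fun j => z j * v g)]
            simp
        _ = ∑ g ∈ G, η g * (⨆ j ∈ g, |z j|) * τ := by
            refine Finset.sum_congr rfl fun g hg => ?_
            rw [hvz g hg, hjsel2 g hg]; ring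
        _ = τ * Omega G η z := by
            unfold Omega; rw [Finset.mul_sum]
            exact Finset.sum_congr rfl fun g hg => by ring
    have hlt : τ * Omega G η z < ∑ j, z j * κ j := by
      have h1 := hfK (F ξs) ⟨ξs, hξsD, rfl⟩
      have h2 := hfκ
      rw [hFa] at h1
      rw [hfx] at h2
      linarith
    by_cases hΩ : Omega G η z = 0
    · have hz0 : ∀ j, z j = 0 := by
        intro j
        have hgj := hgselG j
        have hterm : ∀ g ∈ G, 0 ≤ η g * ⨆ i ∈ g, |z i| := fun g hg =>
          mul_nonneg (hη g hg).le (supAbs_nonneg (hne g hg) z)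
        have h0 : η (gsel j) * (⨆ i ∈ gsel j, |z i|) = 0 :=
          (Finset.sum_eq_zero_iff_of_nonneg hterm).mp hΩ _ hgj
        have hsup0 : (⨆ i ∈ gsel j, |z i|) = 0 := by
          rcases mul_eq_zero.mp h0 with h | h
          · exact absurd h (hη _ hgj).ne'
          · exact h
        have hle := le_supAbs (hne _ hgj) z (hgselmem j)
        rw [hsup0] at hle
        exact abs_eq_zero.mp (le_antisymm hle (abs_nonneg _))
      rw [hΩ] at hlt
      simp [hz0] at hlt
    · have hΩpos : 0 < Omega G η z := lt_of_le_of_ne (hΩnonneg z) (Ne.symm hΩ)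
      set c : ℝ := (Omega G η z)⁻¹ with hc
      have hc0 : 0 ≤ c := inv_nonneg.mpr hΩpos.le
      have hmem : (∑ j, (c • z) j * κ j) ∈ S :=
        ⟨c • z, by rw [Omega_smul G η hne z hc0, hc, inv_mul_cancel₀ hΩ], rfl⟩
      have hle := le_csSup hSbdd hmem
      have he : ∑ j, (c • z) j * κ j = c * ∑ j, z j * κ j := by
        rw [Finset.mul_sum]
        exact Finset.sum_congr rfl fun j _ => by simp [mul_assoc]
      rw [he] at hle
      have h3 := mul_lt_mul_of_pos_left hlt (inv_pos.mpr hΩpos)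
      rw [← hc] at h3
      have h4 : c * (τ * Omega G η z) = τ := by
        rw [hc, mul_left_comm, inv_mul_cancel₀ hΩ, mul_one]
      rw [h4] at h3
      exact absurd hle (not_le.mpr h3)
  obtain ⟨ξ, hξD, hξκ⟩ := hκK
  exact ⟨τ, ξ, hτ0, fun j => congrFun hξκ j, hξD.2.1, hξD.2.2, hdual,
    fun τ' ξ' h1 h2 h3 h4 => csSup_le hSne (hweak τ' ξ' h1 h2 h3 h4)⟩
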